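/- Let G be a finite group and let H be a Hall subgroup of G, i.e. a subgroup with gcd(|H|, [G : H]) = 1. If H is subnormal in G, then H is normal in G. -/

import Mathlib

/-- A subgroup `H` of a group `G` is subnormal if there is a finite chain
`H = H_0 ≤ H_1 ≤ ⋯ ≤ H_n = G` in which each `H_{i-1}` is normal in `H_i`. -/
def IsSubnormal {G : Type*} [Group G] (H : Subgroup G) : Prop :=
  ∃ (n : ℕ) (f : Fin (n + 1) → Subgroup G),
    f 0 = H ∧ f (Fin.last n) = ⊤ ∧
    ∀ i : Fin n, f i.castSucc ≤ f i.succ ∧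
      ∀ x ∈ f i.succ, ∀ h ∈ f i.castSucc, x * h * x⁻¹ ∈ f i.castSucc

theorem hall_subnormal_normal {G : Type*} [Group G] [Finite G] (H : Subgroup G)
    (hHall : Nat.Coprime (Nat.card H) H.index) (hsub : IsSubnormal H) :
    H.Normal := by
  obtain ⟨n, f, h0, hlast, hstep⟩ := hsub
  have key : ∀ i : Fin (n + 1),
      H ≤ f i ∧ ∀ x ∈ f i, ∀ h ∈ H, x * h * x⁻¹ ∈ H := by
    intro i
    induction i using Fin.induction with
    | zero =>
      refine ⟨h0.ge, fun x hx h hh => ?_⟩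
      rw [h0] at hx
      exact H.mul_mem (H.mul_mem hx hh) (H.inv_mem hx)
    | succ i ih =>
      obtain ⟨hle, hconj⟩ := ih
      refine ⟨hle.trans (hstep i).1, fun x hx h hh => ?_⟩
      set K := f i.castSucc with hK
      -- H.subgroupOf K is a normal subgroup of K
      haveI hN : (H.subgroupOf K).Normal := by
        constructor
        intro m hm g
        rw [Subgroup.mem_subgroupOf] at hm ⊢
        exact hconj g g.2 m hm
      -- the conjugate x h x⁻¹ lies in K
      have hmemK : x * h * x⁻¹ ∈ K := (hstep i).2 x hx h (hle hh)
      set k : K := ⟨x * h * x⁻¹, hmemK⟩ with hk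
      -- order of the image of k in K ⧸ H.subgroupOf K divides Nat.card H
      have ho1 : orderOf ((QuotientGroup.mk' (H.subgroupOf K)) k) ∣ Nat.card H := by
        refine (orderOf_map_dvd _ k).trans ?_
        have : orderOf k = orderOf (x * h * x⁻¹ : G) :=
          (orderOf_injective K.subtype Subtype.coe_injective k).symm
        rw [this]
        have : orderOf (x * h * x⁻¹ : G) = orderOf h :=
          orderOf_injective (MulAut.conj x).toMonoidHom (MulAut.conj x).injective h
        rw [this]
        exact Subgroup.orderOf_dvd_natCard H hh
      -- and it divides H.index
      have ho2 : orderOf ((QuotientGroup.mk' (H.subgroupOf K)) k) ∣ H.index := by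
        refine (orderOf_dvd_natCard _).trans ?_
        have : Nat.card (K ⧸ H.subgroupOf K) = H.relIndex K := by
          rw [Subgroup.relIndex, Subgroup.index_eq_card]
        rw [this]
        exact Subgroup.relIndex_dvd_index_of_le hle
      have : orderOf ((QuotientGroup.mk' (H.subgroupOf K)) k) = 1 :=
        Nat.eq_one_of_dvd_coprimes hHall ho1 ho2
      have hk1 : (QuotientGroup.mk' (H.subgroupOf K)) k = 1 := orderOf_eq_one_iff.mp this
      have : k ∈ H.subgroupOf K := (QuotientGroup.eq_one_iff k).mp hk1
      rwa [Subgroup.mem_subgroupOf] at this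
  refine ⟨fun h hh g => ?_⟩
  have := (key (Fin.last n)).2 g (by rw [hlast]; trivial) h hh
  exact this
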